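/- Let K_n, K : (-∞, 0] → ℝ (n ∈ ℕ) be continuous functions with K_n(r) ≤ 0 and K(r) ≤ 0 for all r ≤ 0, and suppose K_n → K uniformly on every compact subset of (-∞, 0]. For each n let h_n be the unique twice continuously differentiable solution of h_n'' + K_n h_n = 0 on (-∞, 0] with h_n(0) = 1 that is bounded on (-∞, 0], and let h be the corresponding bounded solution for K. Then h_n → h uniformly on every compact subset of (-∞, 0], and h_n'(0) → h'(0). -/

import Mathlib

open Filter Topology
open Set


/-- Maximum principle: if `ψ'' ≤ p ψ` on `[-T,0]` with `p ≥ 0` bounded, and `ψ ≥ 0` at the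
endpoints, then `ψ ≥ 0` on `[-T,0]`. -/
lemma max_principle (p ψ ψ' ψ'' : ℝ → ℝ) (T : ℝ) (hT : 0 < T)
    (Q : ℝ) (hpQ : ∀ r ∈ Set.Icc (-T) 0, p r ≤ Q)
    (hpnn : ∀ r ∈ Set.Icc (-T) 0, 0 ≤ p r)
    (hψd : ∀ r ∈ Set.Icc (-T) 0, HasDerivWithinAt ψ (ψ' r) (Set.Icc (-T) 0) r)
    (hψ'd : ∀ r ∈ Set.Icc (-T) 0, HasDerivWithinAt ψ' (ψ'' r) (Set.Icc (-T) 0) r)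
    (hL : ∀ r ∈ Set.Icc (-T) 0, ψ'' r ≤ p r * ψ r)
    (hbT : 0 ≤ ψ (-T)) (hb0 : 0 ≤ ψ 0) :
    ∀ r ∈ Set.Icc (-T) 0, 0 ≤ ψ r := by
  intro r hr
  have hQ0 : 0 ≤ Q := le_trans (hpnn 0 (by constructor <;> linarith)) (hpQ 0 (by constructor <;> linarith))
  set l : ℝ := Real.sqrt (Q + 1) with hl_def
  have hl2 : l * l = Q + 1 := Real.mul_self_sqrt (by linarith)
  have hlnn : 0 ≤ l := Real.sqrt_nonneg _
  have key : ∀ η : ℝ, 0 < η → -η ≤ ψ r := by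
    intro η hη
    set φ : ℝ → ℝ := fun x => ψ x - η * Real.exp (l * x) with hφ_def
    set φ' : ℝ → ℝ := fun x => ψ' x - η * (l * Real.exp (l * x)) with hφ'_def
    set φ'' : ℝ → ℝ := fun x => ψ'' x - η * (l * (l * Real.exp (l * x))) with hφ''_def
    have hexp : ∀ x : ℝ, HasDerivAt (fun y => η * Real.exp (l * y)) (η * (l * Real.exp (l * x))) x := by
      intro x
      have h1 : HasDerivAt (fun y : ℝ => l * y) l x := by
        simpa using (hasDerivAt_id x).const_mul l
      have h2 := h1.exp
      have := h2.const_mul η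
      exact this.congr_deriv (by ring)
    have hexp' : ∀ x : ℝ, HasDerivAt (fun y => η * (l * Real.exp (l * y)))
        (η * (l * (l * Real.exp (l * x)))) x := by
      intro x
      have h1 : HasDerivAt (fun y : ℝ => l * y) l x := by
        simpa using (hasDerivAt_id x).const_mul l
      have h2 := (h1.exp.const_mul l).const_mul η
      exact h2.congr_deriv (by ring)
    have hφd : ∀ x ∈ Set.Icc (-T) 0, HasDerivWithinAt φ (φ' x) (Set.Icc (-T) 0) x :=
      fun x hx => (hψd x hx).sub ((hexp x).hasDerivWithinAt)
    have hφcont : ContinuousOn φ (Set.Icc (-T) 0) :=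
      fun x hx => (hφd x hx).continuousWithinAt
    obtain ⟨r0, hr0S, hmin⟩ := isCompact_Icc.exists_isMinOn
      (Set.nonempty_Icc.2 (by linarith)) hφcont
    suffices hsuf : -η ≤ φ r0 by
      have h1 : φ r0 ≤ φ r := hmin hr
      have h2 : 0 < η * Real.exp (l * r) := by positivity
      simp only [hφ_def] at h1 hsuf
      linarith
    by_contra hlt
    push_neg at hlt
    -- r0 is not an endpoint
    have hexple : ∀ x ≤ (0:ℝ), Real.exp (l * x) ≤ 1 := by
      intro x hx
      rw [show (1:ℝ) = Real.exp 0 by simp]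
      exact Real.exp_le_exp.2 (mul_nonpos_of_nonneg_of_nonpos hlnn hx)
    have hφT : -η ≤ φ (-T) := by
      have h1 := hexple (-T) (by linarith)
      have h2 : η * Real.exp (l * -T) ≤ η * 1 := by nlinarith [Real.exp_pos (l * -T)]
      simp only [hφ_def]; linarith
    have hφ0 : -η ≤ φ 0 := by
      simp only [hφ_def, mul_zero, Real.exp_zero]; linarith
    have hr0T : -T < r0 := by
      rcases lt_or_eq_of_le hr0S.1 with h | h
      · exact h
      · exact absurd hlt (by rw [← h]; linarith)
    have hr00 : r0 < 0 := by
      rcases lt_or_eq_of_le hr0S.2 with h | h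
      · exact h
      · exact absurd hlt (by rw [h]; linarith)
    have hnhds : Set.Icc (-T) 0 ∈ 𝓝 r0 := Icc_mem_nhds hr0T hr00
    -- first derivative vanishes
    have hφ'r0 : HasDerivAt φ (φ' r0) r0 := (hφd r0 hr0S).hasDerivAt hnhds
    have hlocmin : IsLocalMin φ r0 := hmin.isLocalMin hnhds
    have hφ'zero : φ' r0 = 0 := hlocmin.hasDerivAt_eq_zero hφ'r0
    -- second derivative is negative
    have hφr0neg : φ r0 < 0 := by linarith
    have hc_neg : φ'' r0 < 0 := by
      have h1 := hL r0 hr0S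
      have h2 := hpnn r0 hr0S
      have h3 := hpQ r0 hr0S
      have h4 : 0 < Real.exp (l * r0) := Real.exp_pos _
      have h5 : ψ r0 = φ r0 + η * Real.exp (l * r0) := by simp [hφ_def]
      have h6 : p r0 * ψ r0 ≤ p r0 * φ r0 + Q * (η * Real.exp (l * r0)) := by
        rw [h5, mul_add]
        linarith [mul_le_mul_of_nonneg_right h3 (mul_nonneg hη.le h4.le)]
      have h7 : p r0 * φ r0 ≤ 0 := mul_nonpos_of_nonneg_of_nonpos h2 (le_of_lt hφr0neg)
      have h8 : η * (l * (l * Real.exp (l * r0))) = (Q + 1) * (η * Real.exp (l * r0)) := by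
        rw [← hl2]; ring
      simp only [hφ''_def]
      rw [h8]
      nlinarith
    have hφ''r0 : HasDerivAt φ' (φ'' r0) r0 := (hψ'd r0 hr0S).hasDerivAt hnhds |>.sub (hexp' r0)
    -- slope of φ' near r0 from the left is positive
    have hslope : Tendsto (slope φ' r0) (𝓝[≠] r0) (𝓝 (φ'' r0)) :=
      hasDerivAt_iff_tendsto_slope.1 hφ''r0
    have hslope' : ∀ᶠ x in 𝓝[<] r0, slope φ' r0 x < 0 :=
      (hslope.mono_left (nhdsWithin_mono _ (fun x hx => ne_of_lt hx))).eventually_lt_const hc_neg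
    have hpos : ∀ᶠ x in 𝓝[<] r0, 0 < φ' x := by
      filter_upwards [hslope', self_mem_nhdsWithin] with x hx hx'
      have hxr : x < r0 := hx'
      rw [slope_def_field, hφ'zero, sub_zero] at hx
      rcases div_neg_iff.1 hx with ⟨h1, h2⟩ | ⟨h1, h2⟩
      · linarith
      · linarith
    obtain ⟨a0, haI, hsub0⟩ := (mem_nhdsLT_iff_exists_mem_Ico_Ioo_subset hr0T).1 hpos
    have haT : -T ≤ a0 := haI.1
    have har0 : a0 < r0 := haI.2
    have hsub : Set.Ioo a0 r0 ⊆ {x | 0 < φ' x} := hsub0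
    set b : ℝ := (a0 + r0) / 2 with hb_def
    have hab : a0 < b := by rw [hb_def]; linarith
    have hbr0 : b < r0 := by rw [hb_def]; linarith
    have hbgeT : -T ≤ b := by rw [hb_def]; linarith
    have hb_in : b ∈ Set.Icc (-T) 0 := ⟨hbgeT, by linarith⟩
    have hmono : StrictMonoOn φ (Set.Icc b r0) := by
      apply strictMonoOn_of_hasDerivWithinAt_pos (convex_Icc b r0)
        (hφcont.mono (Set.Icc_subset_Icc hbgeT hr0S.2)) (f' := φ')
      · intro x hx
        rw [interior_Icc] at hx
        have hx1 : x ∈ Set.Icc (-T) 0 := ⟨by linarith [hx.1], by linarith [hx.2]⟩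
        exact ((hφd x hx1).hasDerivAt
          (Icc_mem_nhds (by linarith [hx.1]) (by linarith [hx.2]))).hasDerivWithinAt
      · intro x hx
        rw [interior_Icc] at hx
        exact hsub ⟨by linarith [hx.1], hx.2⟩
    have hlt2 : φ b < φ r0 :=
      hmono (Set.left_mem_Icc.2 (le_of_lt hbr0)) (Set.right_mem_Icc.2 (le_of_lt hbr0)) hbr0
    exact absurd (hmin hb_in) (not_le.2 hlt2)
  by_contra hcon
  push_neg at hcon
  have := key (-ψ r / 2) (by linarith)
  linarith


/-- A priori bound: a bounded solution of `u'' = q u`, `q ≥ 0`, with `u 0 = 1`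
satisfies `|u| ≤ 1` on `Iic 0`. -/
lemma jacobi_abs_le_one (K u u' u'' : ℝ → ℝ)
    (hKneg : ∀ r : ℝ, r ≤ 0 → K r ≤ 0)
    (hu : ∀ r : ℝ, r ≤ 0 → HasDerivWithinAt u (u' r) (Set.Iic 0) r)
    (hu' : ∀ r : ℝ, r ≤ 0 → HasDerivWithinAt u' (u'' r) (Set.Iic 0) r)
    (hueq : ∀ r : ℝ, r ≤ 0 → u'' r + K r * u r = 0)
    (hu0 : u 0 = 1)
    (hubdd : ∃ C : ℝ, ∀ r : ℝ, r ≤ 0 → |u r| ≤ C) :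
    ∀ r : ℝ, r ≤ 0 → |u r| ≤ 1 := by
  obtain ⟨C, hC⟩ := hubdd
  -- m = u * u' is monotone on Iic 0
  set m : ℝ → ℝ := fun r => u r * u' r with hm_def
  have hmderiv : ∀ r : ℝ, r ≤ 0 →
      HasDerivWithinAt m (u' r * u' r + (-K r) * (u r * u r)) (Set.Iic 0) r := by
    intro r hr
    have h1 : HasDerivWithinAt m (u' r * u' r + u r * u'' r) (Set.Iic 0) r :=
      (hu r hr).mul (hu' r hr)
    have h2 : u'' r = -K r * u r := by have := hueq r hr; linarith
    convert h1 using 1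
    rw [h2]; ring
  have hmmono : MonotoneOn m (Set.Iic 0) := by
    apply monotoneOn_of_hasDerivWithinAt_nonneg (convex_Iic 0)
      (fun r hr => (hmderiv r hr).continuousWithinAt)
      (f' := fun r => u' r * u' r + (-K r) * (u r * u r))
    · intro x hx
      exact ((hmderiv x (le_of_lt (by simpa using hx))).mono
        (interior_subset)).mono (by simp)
    · intro x hx
      have hx' : x ≤ 0 := le_of_lt (by simpa using hx)
      have := hKneg x hx'
      nlinarith [mul_self_nonneg (u' x), mul_self_nonneg (u x)]
  -- m ≥ 0 on Iic 0
  have hmnn : ∀ r : ℝ, r ≤ 0 → 0 ≤ m r := by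
    intro r0 hr0
    by_contra hneg
    push_neg at hneg
    -- consider g = u^2 - 2 m r0 * r on Iic r0, antitone
    set g : ℝ → ℝ := fun r => u r * u r - 2 * m r0 * r with hg_def
    have hganti : AntitoneOn g (Set.Iic r0) := by
      apply antitoneOn_of_hasDerivWithinAt_nonpos (convex_Iic r0)
        (f' := fun r => 2 * m r - 2 * m r0)
      · intro r hr
        have hr' : (r : ℝ) ≤ 0 := le_trans hr hr0
        have : HasDerivWithinAt g (u' r * u r + u r * u' r - 2 * m r0 * 1) (Set.Iic 0) r :=
          ((hu r hr').mul (hu r hr')).sub ((hasDerivWithinAt_id r _).const_mul (2 * m r0))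
        have h2 : HasDerivWithinAt g (2 * m r - 2 * m r0) (Set.Iic 0) r := by
          convert this using 1; simp only [hm_def, hg_def]; ring
        exact (h2.mono (Iic_subset_Iic.2 hr0)).continuousWithinAt
      · intro x hx
        have hx0 : x < r0 := by simpa using hx
        have hx' : (x : ℝ) ≤ 0 := le_of_lt (lt_of_lt_of_le hx0 hr0)
        have : HasDerivWithinAt g (u' x * u x + u x * u' x - 2 * m r0 * 1) (Set.Iic 0) x :=
          ((hu x hx').mul (hu x hx')).sub ((hasDerivWithinAt_id x _).const_mul (2 * m r0))
        have h2 : HasDerivWithinAt g (2 * m x - 2 * m r0) (Set.Iic 0) x := by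
          convert this using 1; simp only [hm_def, hg_def]; ring
        refine ((h2.mono (Iic_subset_Iic.2 hr0)).mono interior_subset).mono ?_
        simp
      · intro x hx
        have hx0 : x < r0 := by simpa using hx
        have hx' : (x : ℝ) ≤ 0 := le_of_lt (lt_of_lt_of_le hx0 hr0)
        have := hmmono hx' hr0 (le_of_lt hx0)
        linarith
    -- pick r very negative
    have hCnn : 0 ≤ C := le_trans (abs_nonneg _) (hC 0 le_rfl)
    obtain ⟨c, hc⟩ : ∃ c, m r0 = c := ⟨m r0, rfl⟩
    have hcneg : c < 0 := hc ▸ hneg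
    set r1 : ℝ := r0 - (C * C + 1) / (2 * (-c)) with hr1_def
    have hr1lt : r1 ≤ r0 := by
      have : 0 < (C * C + 1) / (2 * (-c)) := by
        apply div_pos (by nlinarith) (by linarith)
      rw [hr1_def]; linarith
    have := hganti (Set.mem_Iic.2 hr1lt) (Set.mem_Iic.2 le_rfl) hr1lt
    -- g r1 ≥ g r0
    have hge : u r1 * u r1 ≥ u r0 * u r0 + 2 * c * (r1 - r0) := by
      simp only [hg_def, hc] at this ⊢; linarith
    have hkey : 2 * c * (r1 - r0) = C * C + 1 := by
      have hcn : c ≠ 0 := ne_of_lt hcneg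
      have hd : r1 - r0 = (C * C + 1) / (2 * c) := by
        rw [hr1_def]
        have h2 : (2:ℝ) * -c ≠ 0 := by simp; linarith
        have h3 : (2:ℝ) * c ≠ 0 := by simp [hcn]
        field_simp
        ring
      rw [hd]
      field_simp
    have hub : |u r1| ≤ C := hC r1 (le_trans hr1lt hr0)
    have : u r1 * u r1 ≤ C * C := by
      calc u r1 * u r1 = |u r1| * |u r1| := by rw [abs_mul_abs_self]
      _ ≤ C * C := mul_le_mul hub hub (abs_nonneg _) hCnn
    nlinarith [mul_self_nonneg (u r0)]
  -- u^2 monotone on Iic 0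
  intro r hr
  have hsq : MonotoneOn (fun r => u r * u r) (Set.Iic 0) := by
    apply monotoneOn_of_hasDerivWithinAt_nonneg (convex_Iic 0)
      (f' := fun r => 2 * m r)
    · intro x hx
      exact ((hu x hx).mul (hu x hx)).continuousWithinAt
    · intro x hx
      have hx' : (x : ℝ) ≤ 0 := le_of_lt (by simpa using hx)
      have : HasDerivWithinAt (fun r => u r * u r) (u' x * u x + u x * u' x) (Set.Iic 0) x :=
        (hu x hx').mul (hu x hx')
      have h2 : HasDerivWithinAt (fun r => u r * u r) (2 * m x) (Set.Iic 0) x := by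
        convert this using 1; simp only [hm_def]; ring
      exact (h2.mono interior_subset).mono (by simp)
    · intro x hx
      have hx' : (x : ℝ) ≤ 0 := le_of_lt (by simpa using hx)
      have := hmnn x hx'
      linarith
  have := hsq (Set.mem_Iic.2 hr) (Set.mem_Iic.2 le_rfl) hr
  simp only [hu0] at this
  have h1 : u r * u r ≤ 1 := by simpa using this
  nlinarith [abs_nonneg (u r), abs_mul_abs_self (u r)]

/-- Key stability estimate via the barrier `2(-r)/T + ε(T²-r²)/2`. -/
lemma key_estimate (K1 K2 u1 u1' u1'' u2 u2' u2'' : ℝ → ℝ) (T ε : ℝ) (hT : 0 < T) (hε : 0 ≤ ε)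
    (hK1neg : ∀ r : ℝ, r ≤ 0 → K1 r ≤ 0)
    (Q : ℝ) (hQ : ∀ r ∈ Set.Icc (-T) 0, -K1 r ≤ Q)
    (hu1 : ∀ r : ℝ, r ≤ 0 → HasDerivWithinAt u1 (u1' r) (Set.Iic 0) r)
    (hu1' : ∀ r : ℝ, r ≤ 0 → HasDerivWithinAt u1' (u1'' r) (Set.Iic 0) r)
    (heq1 : ∀ r : ℝ, r ≤ 0 → u1'' r + K1 r * u1 r = 0)
    (hu2 : ∀ r : ℝ, r ≤ 0 → HasDerivWithinAt u2 (u2' r) (Set.Iic 0) r)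
    (hu2' : ∀ r : ℝ, r ≤ 0 → HasDerivWithinAt u2' (u2'' r) (Set.Iic 0) r)
    (heq2 : ∀ r : ℝ, r ≤ 0 → u2'' r + K2 r * u2 r = 0)
    (hb1 : ∀ r : ℝ, r ≤ 0 → |u1 r| ≤ 1) (hb2 : ∀ r : ℝ, r ≤ 0 → |u2 r| ≤ 1)
    (h10 : u1 0 = 1) (h20 : u2 0 = 1)
    (hKd : ∀ r ∈ Set.Icc (-T) 0, |K1 r - K2 r| ≤ ε) :
    ∀ r ∈ Set.Icc (-T) 0, |u1 r - u2 r| ≤ 2 * (-r) / T + ε * T ^ 2 / 2 := by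
  have hIccIic : Set.Icc (-T) 0 ⊆ Set.Iic 0 := fun x hx => hx.2
  have main : ∀ σ : ℝ, σ = 1 ∨ σ = -1 → ∀ r ∈ Set.Icc (-T) 0,
      0 ≤ 2 * (-r) / T + ε * (T ^ 2 - r ^ 2) / 2 + σ * (u1 r - u2 r) := by
    intro σ hσ
    have hσabs : ∀ y : ℝ, σ * y ≤ |y| := by
      intro y
      rcases hσ with h | h <;> rw [h]
      · simpa using le_abs_self y
      · simpa using neg_le_abs y
    apply max_principle (fun r => -K1 r) _
      (fun r => -(2 / T) + (-(ε / 2)) * (2 * r) + σ * (u1' r - u2' r))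
      (fun r => -ε + σ * (u1'' r - u2'' r)) T hT Q
    · exact hQ
    · intro r hr
      simpa using hK1neg r hr.2
    · -- first derivative of ψ
      intro r hr
      have hpoly : HasDerivAt (fun y : ℝ => 2 * (-y) / T + ε * (T ^ 2 - y ^ 2) / 2)
          (-(2 / T) + (-(ε / 2)) * (2 * r)) r := by
        have h2 : HasDerivAt (fun y : ℝ => y ^ 2) (2 * r) r := by simpa using hasDerivAt_pow 2 r
        have h3 := (((hasDerivAt_id r).const_mul (-(2/T))).add (h2.const_mul (-(ε/2)))).add_const
          (ε * T ^ 2 / 2)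
        have h4 : (fun y : ℝ => 2 * (-y) / T + ε * (T ^ 2 - y ^ 2) / 2)
            = fun y : ℝ => (-(2/T)) * y + (-(ε/2)) * y ^ 2 + ε * T ^ 2 / 2 :=
          funext fun y => by ring
        rw [h4]
        exact h3.congr_deriv (by ring)
      exact hpoly.hasDerivWithinAt.add
        ((((hu1 r hr.2).sub (hu2 r hr.2)).const_mul σ).mono hIccIic)
    · -- second derivative
      intro r hr
      have hpoly : HasDerivAt (fun y : ℝ => -(2 / T) + (-(ε / 2)) * (2 * y)) (-ε) r := by
        have h3 := (((hasDerivAt_id r).const_mul 2).const_mul (-(ε/2))).const_add (-(2/T))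
        exact h3.congr_deriv (by ring)
      exact hpoly.hasDerivWithinAt.add
        ((((hu1' r hr.2).sub (hu2' r hr.2)).const_mul σ).mono hIccIic)
    · -- differential inequality
      intro r hr
      have e1 : u1'' r = -(K1 r * u1 r) := by linarith [heq1 r hr.2]
      have e2 : u2'' r = -(K2 r * u2 r) := by linarith [heq2 r hr.2]
      have hp : 0 ≤ -K1 r := by linarith [hK1neg r hr.2]
      have hbar0 : 0 ≤ 2 * (-r) / T + ε * (T ^ 2 - r ^ 2) / 2 := by
        have h1 : r ^ 2 ≤ T ^ 2 := by nlinarith [hr.1, hr.2]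
        have h2 : 0 ≤ 2 * (-r) / T := by
          apply div_nonneg (by linarith [hr.2]) hT.le
        nlinarith
      have habs : σ * ((K2 r - K1 r) * u2 r) ≤ ε := by
        calc σ * ((K2 r - K1 r) * u2 r) ≤ |(K2 r - K1 r) * u2 r| := hσabs _
          _ = |K2 r - K1 r| * |u2 r| := abs_mul _ _
          _ ≤ ε * 1 := by
              apply mul_le_mul _ (hb2 r hr.2) (abs_nonneg _)  hε
              rw [abs_sub_comm]; exact hKd r hr
          _ = ε := mul_one ε
      have hprod : 0 ≤ (-K1 r) * (2 * (-r) / T + ε * (T ^ 2 - r ^ 2) / 2) :=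
        mul_nonneg hp hbar0
      rw [e1, e2]
      nlinarith [hprod, habs]
    · -- boundary at -T
      have hTT : 2 * (-(-T)) / T = 2 := by field_simp
      have hd : |u1 (-T) - u2 (-T)| ≤ 2 := by
        have := hb1 (-T) (by linarith)
        have := hb2 (-T) (by linarith)
        rw [abs_le] at *
        constructor <;> linarith [abs_le.1 (hb1 (-T) (by linarith : (-T:ℝ) ≤ 0)),
          abs_le.1 (hb2 (-T) (by linarith : (-T:ℝ) ≤ 0))]
      have h1 := hσabs (u1 (-T) - u2 (-T))
      have h2 := hσabs (-(u1 (-T) - u2 (-T)))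
      have h3 := abs_le.1 hd
      have h4 : σ * (u1 (-T) - u2 (-T)) ≥ -2 := by
        rcases hσ with h | h <;> rw [h] <;> nlinarith
      rw [hTT]
      nlinarith
    · -- boundary at 0
      rw [h10, h20]
      have : 0 ≤ ε * (T ^ 2 - 0 ^ 2) / 2 := by
        have : (0:ℝ) ^ 2 = 0 := by norm_num
        rw [this, sub_zero]
        positivity
      simpa using this
  intro r hr
  have hm1 := main 1 (Or.inl rfl) r hr
  have hm2 := main (-1) (Or.inr rfl) r hr
  have hbar : ε * (T ^ 2 - r ^ 2) / 2 ≤ ε * T ^ 2 / 2 := by nlinarith [sq_nonneg r]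
  rw [abs_le]
  constructor <;> nlinarith

/-- Stability of the bounded Jacobi solution under locally uniform perturbation of the
nonpositive potential: if `Kₙ → K` uniformly on compact subsets of `(-∞, 0]`, then the
bounded solutions `hₙ` of `hₙ'' + Kₙ hₙ = 0`, `hₙ(0) = 1` converge locally uniformly to
the bounded solution `h` for `K`, and `hₙ'(0) → h'(0)`. -/
theorem stmt_12 (Kseq : ℕ → ℝ → ℝ) (K : ℝ → ℝ)
    (hKseq : ∀ n : ℕ, ContinuousOn (Kseq n) (Set.Iic 0))
    (hKseqneg : ∀ n : ℕ, ∀ r : ℝ, r ≤ 0 → Kseq n r ≤ 0)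
    (hK : ContinuousOn K (Set.Iic 0))
    (hKneg : ∀ r : ℝ, r ≤ 0 → K r ≤ 0)
    (hKconv : ∀ s : Set ℝ, s ⊆ Set.Iic 0 → IsCompact s →
      TendstoUniformlyOn (fun n => Kseq n) K atTop s)
    (hseq hseq' hseq'' : ℕ → ℝ → ℝ) (h h' h'' : ℝ → ℝ)
    (hhn : ∀ n : ℕ, ∀ r : ℝ, r ≤ 0 → HasDerivWithinAt (hseq n) (hseq' n r) (Set.Iic 0) r)
    (hhn' : ∀ n : ℕ, ∀ r : ℝ, r ≤ 0 → HasDerivWithinAt (hseq' n) (hseq'' n r) (Set.Iic 0) r)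
    (hhn'' : ∀ n : ℕ, ContinuousOn (hseq'' n) (Set.Iic 0))
    (heqn : ∀ n : ℕ, ∀ r : ℝ, r ≤ 0 → hseq'' n r + Kseq n r * hseq n r = 0)
    (hn0 : ∀ n : ℕ, hseq n 0 = 1)
    (hnbdd : ∀ n : ℕ, ∃ C : ℝ, ∀ r : ℝ, r ≤ 0 → |hseq n r| ≤ C)
    (hh : ∀ r : ℝ, r ≤ 0 → HasDerivWithinAt h (h' r) (Set.Iic 0) r)
    (hh' : ∀ r : ℝ, r ≤ 0 → HasDerivWithinAt h' (h'' r) (Set.Iic 0) r)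
    (hh'' : ContinuousOn h'' (Set.Iic 0))
    (heq : ∀ r : ℝ, r ≤ 0 → h'' r + K r * h r = 0)
    (h0 : h 0 = 1)
    (hbdd : ∃ C : ℝ, ∀ r : ℝ, r ≤ 0 → |h r| ≤ C) :
    (∀ s : Set ℝ, s ⊆ Set.Iic 0 → IsCompact s →
      TendstoUniformlyOn (fun n => hseq n) h atTop s) ∧
    Tendsto (fun n => hseq' n 0) atTop (𝓝 (h' 0)) := by
  -- a priori bounds
  have habs1 : ∀ n : ℕ, ∀ r : ℝ, r ≤ 0 → |hseq n r| ≤ 1 := fun n =>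
    jacobi_abs_le_one (Kseq n) (hseq n) (hseq' n) (hseq'' n) (hKseqneg n) (hhn n) (hhn' n)
      (heqn n) (hn0 n) (hnbdd n)
  have habs2 : ∀ r : ℝ, r ≤ 0 → |h r| ≤ 1 :=
    jacobi_abs_le_one K h h' h'' hKneg hh hh' heq h0 hbdd
  -- Part 1
  have part1 : ∀ s : Set ℝ, s ⊆ Set.Iic 0 → IsCompact s →
      TendstoUniformlyOn (fun n => hseq n) h atTop s := by
    intro s hs hsc
    rw [Metric.tendstoUniformlyOn_iff]
    intro δ hδ
    obtain ⟨a0, ha0⟩ := hsc.bddBelow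
    set A : ℝ := max (-a0) 0 + 1 with hA_def
    have hA1 : 1 ≤ A := by
      have : (0:ℝ) ≤ max (-a0) 0 := le_max_right _ _
      rw [hA_def]; linarith
    have hA0 : 0 < A := by linarith
    have hsubA : s ⊆ Set.Icc (-A) 0 := by
      intro x hx
      refine ⟨?_, hs hx⟩
      have h1 : a0 ≤ x := ha0 hx
      have h2 : -a0 ≤ max (-a0) 0 := le_max_left _ _
      rw [hA_def]; linarith
    set T : ℝ := max A (4 * A / δ + 1) with hT_def
    have hTA : A ≤ T := le_max_left _ _
    have hT : 0 < T := by linarith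
    have hT4 : 4 * A / δ < T := by
      have : 4 * A / δ + 1 ≤ T := le_max_right _ _
      linarith
    have hhalf : 2 * A / T < δ / 2 := by
      rw [div_lt_div_iff₀ hT (by norm_num : (0:ℝ) < 2)]
      have h1 : 4 * A < δ * T := by
        rw [div_lt_iff₀ hδ] at hT4
        linarith [mul_comm δ T ▸ hT4]
      linarith
    have hKc := hKconv (Set.Icc (-T) 0) (fun x hx => hx.2) isCompact_Icc
    rw [Metric.tendstoUniformlyOn_iff] at hKc
    have hεpos : 0 < δ / (2 * T ^ 2) := by positivity
    filter_upwards [hKc (δ / (2 * T ^ 2)) hεpos] with n hn x hx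
    have hKd : ∀ r ∈ Set.Icc (-T) 0, |Kseq n r - K r| ≤ δ / (2 * T ^ 2) := by
      intro r hr
      have := hn r hr
      rw [Real.dist_eq, abs_sub_comm] at this
      exact this.le
    -- bound Q for -Kseq n on Icc (-T) 0
    obtain ⟨x0, hx0, hx0max⟩ := isCompact_Icc.exists_isMaxOn
      (Set.nonempty_Icc.2 (by linarith : -T ≤ (0:ℝ)))
      (((hKseq n).mono (fun y hy => hy.2)).neg)
    have hest := key_estimate (Kseq n) K (hseq n) (hseq' n) (hseq'' n) h h' h'' T
      (δ / (2 * T ^ 2)) hT hεpos.le (hKseqneg n) (-Kseq n x0) (fun r hr => hx0max hr)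
      (hhn n) (hhn' n) (heqn n) hh hh' heq (habs1 n) habs2 (hn0 n) h0 hKd
    have hxIcc : x ∈ Set.Icc (-T) 0 := by
      have := hsubA hx
      exact ⟨by linarith [this.1], this.2⟩
    have hb := hest x hxIcc
    rw [Real.dist_eq, abs_sub_comm]
    have h1 : 2 * (-x) / T ≤ 2 * A / T := by
      have hx' : -x ≤ A := by linarith [(hsubA hx).1]
      apply div_le_div_of_nonneg_right ?_ hT.le
      linarith
    have h2 : δ / (2 * T ^ 2) * T ^ 2 / 2 = δ / 4 := by
      field_simp
      ring
    calc |hseq n x - h x| ≤ 2 * (-x) / T + δ / (2 * T ^ 2) * T ^ 2 / 2 := hb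
      _ = 2 * (-x) / T + δ / 4 := by rw [h2]
      _ < δ / 2 + δ / 4 := by linarith
      _ < δ := by linarith
  refine ⟨part1, ?_⟩
  -- Part 2
  rw [Metric.tendsto_nhds]
  intro ρ hρ
  obtain ⟨x0, hx0, hmax⟩ := isCompact_Icc.exists_isMaxOn
    (Set.nonempty_Icc.2 (by norm_num : (-1:ℝ) ≤ 0))
    ((hK.mono (fun y hy => hy.2)).abs)
  set QK : ℝ := |K x0| with hQK_def
  have hQK0 : 0 ≤ QK := abs_nonneg _
  set t : ℝ := min 1 (ρ / (2 * (QK + 2))) with ht_def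
  have ht0 : 0 < t := lt_min one_pos (by positivity)
  have ht1 : t ≤ 1 := min_le_left _ _
  have htρ : t * (QK + 2) ≤ ρ / 2 := by
    have h1 : t ≤ ρ / (2 * (QK + 2)) := min_le_right _ _
    rw [le_div_iff₀ (by positivity : (0:ℝ) < 2 * (QK + 2))] at h1
    nlinarith
  set δ : ℝ := min 1 (t * ρ / 8) with hδ_def
  have hδ0 : 0 < δ := lt_min one_pos (by positivity)
  have hδ1 : δ ≤ 1 := min_le_left _ _
  have hδt : δ / t ≤ ρ / 8 := by
    have h1 : δ ≤ t * ρ / 8 := min_le_right _ _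
    rw [div_le_iff₀ ht0]
    nlinarith
  have hp1 := part1 (Set.Icc (-1) 0) (fun y hy => hy.2) isCompact_Icc
  rw [Metric.tendstoUniformlyOn_iff] at hp1
  have hKc := hKconv (Set.Icc (-1) 0) (fun y hy => hy.2) isCompact_Icc
  rw [Metric.tendstoUniformlyOn_iff] at hKc
  filter_upwards [hp1 δ hδ0, hKc 1 one_pos] with n hn1 hn2
  -- w := hseq n - h
  have hwbd : ∀ x ∈ Set.Icc (-1) 0, |hseq n x - h x| ≤ δ := by
    intro x hx
    have := hn1 x hx
    rw [Real.dist_eq, abs_sub_comm] at this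
    exact this.le
  have hKnbd : ∀ x ∈ Set.Icc (-1) 0, |Kseq n x| ≤ QK + 1 := by
    intro x hx
    have h1 := hn2 x hx
    rw [Real.dist_eq] at h1
    have h2 : |K x| ≤ QK := hmax hx
    calc |Kseq n x| = |K x + (Kseq n x - K x)| := by ring_nf
      _ ≤ |K x| + |Kseq n x - K x| := abs_add_le _ _
      _ ≤ QK + 1 := by rw [abs_sub_comm] at h1; linarith
  -- MVT 1 on [-t, 0]
  have hwcont : ContinuousOn (fun x => hseq n x - h x) (Set.Icc (-t) 0) := by
    intro x hx
    exact (((hhn n x hx.2).sub (hh x hx.2)).continuousWithinAt).mono (fun y hy => hy.2)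
  have hwderiv : ∀ x ∈ Set.Ioo (-t) 0, HasDerivAt (fun x => hseq n x - h x)
      (hseq' n x - h' x) x := by
    intro x hx
    exact ((hhn n x hx.2.le).sub (hh x hx.2.le)).hasDerivAt (Iic_mem_nhds hx.2)
  obtain ⟨c, hc, hcs⟩ := exists_hasDerivAt_eq_slope (fun x => hseq n x - h x)
    (fun x => hseq' n x - h' x) (by linarith : -t < 0) hwcont hwderiv
  -- MVT 2 on [c, 0]
  have hw'cont : ContinuousOn (fun x => hseq' n x - h' x) (Set.Icc c 0) := by
    intro x hx
    exact (((hhn' n x hx.2).sub (hh' x hx.2)).continuousWithinAt).mono (fun y hy => hy.2)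
  have hw'deriv : ∀ x ∈ Set.Ioo c 0, HasDerivAt (fun x => hseq' n x - h' x)
      (hseq'' n x - h'' x) x := by
    intro x hx
    exact ((hhn' n x hx.2.le).sub (hh' x hx.2.le)).hasDerivAt (Iic_mem_nhds hx.2)
  obtain ⟨d, hd, hds⟩ := exists_hasDerivAt_eq_slope (fun x => hseq' n x - h' x)
    (fun x => hseq'' n x - h'' x) hc.2 hw'cont hw'deriv
  -- assemble
  have hc0 : c < 0 := hc.2
  have hct : -t < c := hc.1
  have hw0 : hseq n 0 - h 0 = 0 := by rw [hn0 n, h0]; ring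
  have htIcc : (-t) ∈ Set.Icc (-1:ℝ) 0 := ⟨by linarith, by linarith⟩
  have hwc : |hseq' n c - h' c| ≤ δ / t := by
    rw [hcs, hw0, zero_sub, abs_div]
    have h2 : |(0:ℝ) - -t| = t := by rw [zero_sub, neg_neg, abs_of_pos ht0]
    rw [h2, abs_neg]
    have h1 := hwbd (-t) htIcc
    exact div_le_div_of_nonneg_right h1 ht0.le
  have h0c : (0:ℝ) - c ≠ 0 := by intro hcon; linarith [hc0]
  have hw'0 : hseq' n 0 - h' 0 = (hseq' n c - h' c) + (hseq'' n d - h'' d) * (0 - c) := by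
    rw [hds]
    field_simp
    ring
  have hdIcc : d ∈ Set.Icc (-1:ℝ) 0 := ⟨by linarith [hd.1, hc.1], hd.2.le⟩
  have e1 : hseq'' n d = -(Kseq n d * hseq n d) := by linarith [heqn n d hd.2.le]
  have e2 : h'' d = -(K d * h d) := by linarith [heq d hd.2.le]
  have hw''d : |hseq'' n d - h'' d| ≤ (QK + 1) * δ + 1 := by
    have hid : hseq'' n d - h'' d
        = -(Kseq n d) * (hseq n d - h d) + (K d - Kseq n d) * h d := by
      rw [e1, e2]; ring
    rw [hid]
    have hA : |-(Kseq n d) * (hseq n d - h d)| ≤ (QK + 1) * δ := by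
      rw [abs_mul, abs_neg]
      exact mul_le_mul (hKnbd d hdIcc) (hwbd d hdIcc) (abs_nonneg _) (by linarith)
    have hB : |(K d - Kseq n d) * h d| ≤ 1 := by
      rw [abs_mul]
      have h1 := hn2 d hdIcc
      rw [Real.dist_eq] at h1
      have h2 := habs2 d hd.2.le
      calc |K d - Kseq n d| * |h d| ≤ 1 * 1 :=
        mul_le_mul h1.le h2 (abs_nonneg _) (by norm_num)
        _ = 1 := mul_one 1
    calc |-(Kseq n d) * (hseq n d - h d) + (K d - Kseq n d) * h d|
        ≤ |-(Kseq n d) * (hseq n d - h d)| + |(K d - Kseq n d) * h d| := abs_add_le _ _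
      _ ≤ (QK + 1) * δ + 1 := by linarith
  have hfin : |hseq' n 0 - h' 0| ≤ δ / t + t * ((QK + 1) * δ + 1) := by
    rw [hw'0]
    have hstep : |(hseq'' n d - h'' d) * (0 - c)| ≤ ((QK + 1) * δ + 1) * t := by
      rw [abs_mul]
      have h1 : |(0:ℝ) - c| ≤ t := by
        rw [zero_sub, abs_of_pos (by linarith : 0 < -c)]
        linarith
      exact mul_le_mul hw''d h1 (abs_nonneg _) (by positivity)
    calc |(hseq' n c - h' c) + (hseq'' n d - h'' d) * (0 - c)|
        ≤ |hseq' n c - h' c| + |(hseq'' n d - h'' d) * (0 - c)| := abs_add_le _ _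
      _ ≤ δ / t + ((QK + 1) * δ + 1) * t := by linarith
      _ = δ / t + t * ((QK + 1) * δ + 1) := by ring
  rw [Real.dist_eq]
  have hQ2 : (QK + 1) * δ + 1 ≤ QK + 2 := by nlinarith
  have h2 : t * ((QK + 1) * δ + 1) ≤ t * (QK + 2) := mul_le_mul_of_nonneg_left hQ2 ht0.le
  calc |hseq' n 0 - h' 0| ≤ δ / t + t * ((QK + 1) * δ + 1) := hfin
    _ ≤ ρ / 8 + ρ / 2 := by linarith
    _ < ρ := by linarith
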